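/- Let H(x,y) = y²/2 + x²/2 + x⁴/4. Then x² y³ dx = (4/3·H·x² + 8/21·x² − 4/21·H)·y dx − (2/7·x y + 1/3·x³ y)·dH + d(1/9·x³y³ + 2/21·x y³) as polynomial 1-forms on ℝ². -/

import Mathlib

/-- partial derivative in the first variable -/
noncomputable def pdx (F : ℝ → ℝ → ℝ) (x y : ℝ) : ℝ := deriv (fun t => F t y) x

/-- partial derivative in the second variable -/
noncomputable def pdy (F : ℝ → ℝ → ℝ) (x y : ℝ) : ℝ := deriv (fun t => F x t) y

noncomputable def H (x y : ℝ) : ℝ := y^2/2 + x^2/2 + x^4/4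

/-- (i5):  x²y³ dx = (4/3·H·x² + 8/21·x² − 4/21·H)·y dx − (2/7·xy + 1/3·x³y)·dH
    + d(1/9·x³y³ + 2/21·xy³) -/
theorem decomposition_i5 : ∀ x y : ℝ,
    x^2 * y^3 = (4/3 * H x y * x^2 + 8/21 * x^2 - 4/21 * H x y) * y
      - (2/7 * x * y + 1/3 * x^3 * y) * pdx H x y
      + pdx (fun x y => 1/9 * x^3 * y^3 + 2/21 * x * y^3) x y
  ∧ (0 : ℝ) = - (2/7 * x * y + 1/3 * x^3 * y) * pdy H x y
      + pdy (fun x y => 1/9 * x^3 * y^3 + 2/21 * x * y^3) x y := by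
  intro x y
  have h1 : pdx H x y = x + x^3 := by
    simp only [pdx, H]
    rw [show (fun t : ℝ => y^2/2 + t^2/2 + t^4/4) = fun t : ℝ => y^2/2 + t^2/2 + t^4/4 from rfl]
    have : HasDerivAt (fun t : ℝ => y^2/2 + t^2/2 + t^4/4) (x + x^3) x := by
      have := ((hasDerivAt_pow 2 x).div_const 2).const_add (y^2/2) |>.add
        ((hasDerivAt_pow 4 x).div_const 4)
      refine this.congr_deriv ?_
      simp only [Nat.cast_ofNat, Nat.reduceSub]
      ring
    exact this.deriv
  have h2 : pdy H x y = y := by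
    have : HasDerivAt (fun t : ℝ => t^2/2 + x^2/2 + x^4/4) y y := by
      have := ((hasDerivAt_pow 2 y).div_const 2).add_const (x^2/2 + x^4/4)
      rw [show (fun t : ℝ => t^2/2 + x^2/2 + x^4/4) = fun t => t^2/2 + (x^2/2 + x^4/4) by ext; ring]
      refine this.congr_deriv ?_
      simp only [Nat.cast_ofNat, Nat.reduceSub]
      ring
    simpa [pdy, H] using this.deriv
  have h3 : pdx (fun x y => 1/9 * x^3 * y^3 + 2/21 * x * y^3) x y
      = 1/3 * x^2 * y^3 + 2/21 * y^3 := by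
    have : HasDerivAt (fun t : ℝ => 1/9 * t^3 * y^3 + 2/21 * t * y^3)
        (1/3 * x^2 * y^3 + 2/21 * y^3) x := by
      have := (((hasDerivAt_pow 3 x).const_mul (1/9)).mul_const (y^3)).add
        (((hasDerivAt_id x).const_mul (2/21)).mul_const (y^3))
      refine this.congr_deriv ?_
      simp only [Nat.cast_ofNat, Nat.reduceSub]
      ring
    exact this.deriv
  have h4 : pdy (fun x y => 1/9 * x^3 * y^3 + 2/21 * x * y^3) x y
      = (1/9 * x^3 + 2/21 * x) * (3 * y^2) := by
    have : HasDerivAt (fun t : ℝ => 1/9 * x^3 * t^3 + 2/21 * x * t^3)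
        ((1/9 * x^3 + 2/21 * x) * (3 * y^2)) y := by
      have := ((hasDerivAt_pow 3 y).const_mul (1/9 * x^3)).add
        ((hasDerivAt_pow 3 y).const_mul (2/21 * x))
      refine this.congr_deriv ?_
      simp only [Nat.cast_ofNat, Nat.reduceSub]
      ring
    exact this.deriv
  constructor
  · rw [h1, h3]; simp [H]; ring
  · rw [h2, h4]; ring
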